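/- Let p ∈ [1,∞] and let F : ℝ_{≥0} → ℝ_{≥0} be an increasing bijection (a reparameterization) which is continuous and differentiable with bounded derivative F'. Then for all persistence diagrams D, D' (finite multisets of points in V = {(a,b) ∈ ℝ_{≥0}² : a ≤ b}), one has W_p(F(D), F(D')) ≤ (sup F') · W_p(D, D'), where F(D) denotes the persistence diagram obtained by replacing each point (a,b) of D with (F(a), F(b)). -/
import Mathlib

open scoped ENNReal BigOperators

/-- The `p`-norm distance between two points of the plane, valued in `ℝ≥0∞`
(`p = ∞` gives the sup-norm). -/
noncomputable def dp (p : ℝ≥0∞) (x y : ℝ × ℝ) : ℝ≥0∞ :=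
  if p = ∞ then max (ENNReal.ofReal |x.1 - y.1|) (ENNReal.ofReal |x.2 - y.2|)
  else (ENNReal.ofReal |x.1 - y.1| ^ p.toReal + ENNReal.ofReal |x.2 - y.2| ^ p.toReal)
      ^ (1 / p.toReal)

/-- Distance (in the `p`-norm) from a point to the diagonal `Δ = {(z,z) : z ≥ 0}`. -/
noncomputable def dDelta (p : ℝ≥0∞) (x : ℝ × ℝ) : ℝ≥0∞ :=
  ⨅ z ∈ Set.Ici (0 : ℝ), dp p x (z, z)

/-- A persistence diagram: a finite (multi)family of points of the plane. -/
structure PD where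
  m : ℕ
  pts : Fin m → ℝ × ℝ

/-- Validity: all points lie in `V = {(a,b) : 0 ≤ a ≤ b}`. -/
def PD.valid (D : PD) : Prop := ∀ i, 0 ≤ (D.pts i).1 ∧ (D.pts i).1 ≤ (D.pts i).2

/-- Applying a reparameterization `F` to each coordinate of each point of a diagram. -/
noncomputable def PD.map (F : ℝ → ℝ) (D : PD) : PD :=
  ⟨D.m, fun i => (F (D.pts i).1, F (D.pts i).2)⟩

/-- The `p`-norm of a finite family of values in `ℝ≥0∞` (`p = ∞` gives the max). -/
noncomputable def pNormE (p : ℝ≥0∞) {ι : Type} (s : Finset ι) (f : ι → ℝ≥0∞) : ℝ≥0∞ :=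
  if p = ∞ then s.sup f else (∑ i ∈ s, f i ^ p.toReal) ^ (1 / p.toReal)

/-- The `p`-norm of a triple of values in `ℝ≥0∞`. -/
noncomputable def pNorm3 (p : ℝ≥0∞) (u v w : ℝ≥0∞) : ℝ≥0∞ :=
  if p = ∞ then max u (max v w)
  else (u ^ p.toReal + v ^ p.toReal + w ^ p.toReal) ^ (1 / p.toReal)

/-- The `p`-Wasserstein distance between persistence diagrams: the infimum, over all
partial injective matchings `α : I → {1,…,n}` (`I ⊆ {1,…,m}`), of the `p`-norm of the
triple (cost of matched points, cost of unmatched points of `D` to the diagonal,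
cost of unmatched points of `D'` to the diagonal). -/
noncomputable def Wdist (p : ℝ≥0∞) (D D' : PD) : ℝ≥0∞ :=
  ⨅ (I : Finset (Fin D.m)) (α : ↥I → Fin D'.m) (_ : Function.Injective α),
    pNorm3 p
      (pNormE p Finset.univ (fun i : ↥I => dp p (D.pts i.1) (D'.pts (α i))))
      (pNormE p Iᶜ (fun i => dDelta p (D.pts i)))
      (pNormE p (Finset.univ.image α)ᶜ (fun j => dDelta p (D'.pts j)))

private lemma factor_rpow (c S : ℝ≥0∞) {r : ℝ} (hr : 0 < r) :
    (c ^ r * S) ^ (1 / r) = c * S ^ (1 / r) := by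
  rw [ENNReal.mul_rpow_of_nonneg _ _ (by positivity), ← ENNReal.rpow_mul,
    mul_one_div_cancel hr.ne', ENNReal.rpow_one]

private lemma pNormE_le_mul {p : ℝ≥0∞} (hp : 1 ≤ p) {ι : Type} (s : Finset ι)
    (f g : ι → ℝ≥0∞) (C : ℝ≥0∞) (h : ∀ i ∈ s, g i ≤ C * f i) :
    pNormE p s g ≤ C * pNormE p s f := by
  unfold pNormE
  split_ifs with hinf
  · exact Finset.sup_le fun i hi => (h i hi).trans (mul_le_mul_right (Finset.le_sup hi) C)
  · have hr : 0 < p.toReal := ENNReal.toReal_pos (zero_lt_one.trans_le hp).ne' hinf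
    calc (∑ i ∈ s, g i ^ p.toReal) ^ (1 / p.toReal)
        ≤ (∑ i ∈ s, (C * f i) ^ p.toReal) ^ (1 / p.toReal) := by
          refine ENNReal.rpow_le_rpow (Finset.sum_le_sum fun i hi => ?_) (by positivity)
          exact ENNReal.rpow_le_rpow (h i hi) hr.le
      _ = (C ^ p.toReal * ∑ i ∈ s, f i ^ p.toReal) ^ (1 / p.toReal) := by
          rw [Finset.mul_sum]
          congr 1
          exact Finset.sum_congr rfl fun i _ => ENNReal.mul_rpow_of_nonneg _ _ hr.le
      _ = C * (∑ i ∈ s, f i ^ p.toReal) ^ (1 / p.toReal) := factor_rpow _ _ hr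

private lemma pNorm3_le_mul {p : ℝ≥0∞} (hp : 1 ≤ p) (C u v w u' v' w' : ℝ≥0∞)
    (hu : u' ≤ C * u) (hv : v' ≤ C * v) (hw : w' ≤ C * w) :
    pNorm3 p u' v' w' ≤ C * pNorm3 p u v w := by
  unfold pNorm3
  split_ifs with hinf
  · refine max_le (hu.trans (mul_le_mul_right (le_max_left _ _) C)) (max_le ?_ ?_)
    · exact hv.trans (mul_le_mul_right ((le_max_left _ _).trans (le_max_right _ _)) C)
    · exact hw.trans (mul_le_mul_right ((le_max_right _ _).trans (le_max_right _ _)) C)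
  · have hr : 0 < p.toReal := ENNReal.toReal_pos (zero_lt_one.trans_le hp).ne' hinf
    calc (u' ^ p.toReal + v' ^ p.toReal + w' ^ p.toReal) ^ (1 / p.toReal)
        ≤ ((C * u) ^ p.toReal + (C * v) ^ p.toReal + (C * w) ^ p.toReal) ^ (1 / p.toReal) := by
          refine ENNReal.rpow_le_rpow ?_ (by positivity)
          exact add_le_add (add_le_add (ENNReal.rpow_le_rpow hu hr.le)
            (ENNReal.rpow_le_rpow hv hr.le)) (ENNReal.rpow_le_rpow hw hr.le)
      _ = (C ^ p.toReal * (u ^ p.toReal + v ^ p.toReal + w ^ p.toReal)) ^ (1 / p.toReal) := by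
          simp only [ENNReal.mul_rpow_of_nonneg _ _ hr.le, mul_add]
      _ = C * (u ^ p.toReal + v ^ p.toReal + w ^ p.toReal) ^ (1 / p.toReal) := factor_rpow _ _ hr

/-- If `F : ℝ≥0 → ℝ≥0` is an increasing bijection which is continuous and
differentiable with bounded derivative, then for all persistence diagrams `D, D'` one has
`W_p(F(D), F(D')) ≤ (sup F') · W_p(D, D')`. -/
theorem wasserstein_reparam_deriv_lipschitz
    (p : ℝ≥0∞) (hp : 1 ≤ p) (F F' : ℝ → ℝ)
    (hmono : StrictMonoOn F (Set.Ici (0 : ℝ)))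
    (hbij : Set.BijOn F (Set.Ici (0 : ℝ)) (Set.Ici (0 : ℝ)))
    (hcont : ContinuousOn F (Set.Ici (0 : ℝ)))
    (hderiv : ∀ t ∈ Set.Ici (0 : ℝ), HasDerivAt F (F' t) t)
    (hbdd : BddAbove (F' '' Set.Ici (0 : ℝ)))
    (D D' : PD) (hD : D.valid) (hD' : D'.valid) :
    Wdist p (D.map F) (D'.map F)
      ≤ ENNReal.ofReal (sSup (F' '' Set.Ici (0 : ℝ))) * Wdist p D D' := by
  set L := sSup (F' '' Set.Ici (0 : ℝ)) with hLdef
  have hL'le : ∀ t ∈ Set.Ici (0 : ℝ), F' t ≤ L := fun t ht => le_csSup hbdd ⟨t, ht, rfl⟩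
  -- Mean value inequality
  have hslope : ∀ a b : ℝ, 0 ≤ a → a < b → F b - F a ≤ L * (b - a) := by
    intro a b ha hab
    obtain ⟨c, hc, hceq⟩ := exists_hasDerivAt_eq_slope F F' hab
      (hcont.mono fun x hx => le_trans ha hx.1)
      (fun x hx => hderiv x (le_trans ha hx.1.le))
    have h1 : F' c * (b - a) = F b - F a := by
      rw [hceq]; exact div_mul_cancel₀ _ (sub_ne_zero.mpr hab.ne')
    rw [← h1]
    exact mul_le_mul_of_nonneg_right (hL'le c (le_trans ha hc.1.le)) (sub_nonneg.mpr hab.le)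
  have hLpos : 0 < L := by
    obtain ⟨c, hc, hceq⟩ := exists_hasDerivAt_eq_slope F F' one_pos
      (hcont.mono fun x hx => hx.1)
      (fun x hx => hderiv x hx.1.le)
    have h0 : F 0 < F 1 := hmono (Set.mem_Ici.mpr le_rfl) (Set.mem_Ici.mpr zero_le_one) one_pos
    have : 0 < F' c := by
      rw [hceq]
      apply div_pos (sub_pos.mpr h0)
      norm_num
    exact lt_of_lt_of_le this (hL'le c hc.1.le)
  have key : ∀ a b : ℝ, 0 ≤ a → 0 ≤ b → |F a - F b| ≤ L * |a - b| := by
    intro a b ha hb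
    rcases lt_trichotomy a b with h | h | h
    · have hF : F a < F b := hmono ha hb h
      rw [abs_sub_comm, abs_of_nonneg (sub_nonneg.mpr hF.le), abs_sub_comm a b,
        abs_of_nonneg (sub_nonneg.mpr h.le)]
      exact hslope a b ha h
    · simp [h]
    · have hF : F b < F a := hmono hb ha h
      rw [abs_of_nonneg (sub_nonneg.mpr hF.le), abs_of_nonneg (sub_nonneg.mpr h.le)]
      exact hslope b a hb h
  set C := ENNReal.ofReal L with hCdef
  have hC0 : C ≠ 0 := (ENNReal.ofReal_pos.mpr hLpos).ne'
  have hCt : C ≠ ∞ := ENNReal.ofReal_ne_top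
  have keyE : ∀ a b : ℝ, 0 ≤ a → 0 ≤ b →
      ENNReal.ofReal |F a - F b| ≤ C * ENNReal.ofReal |a - b| := by
    intro a b ha hb
    calc ENNReal.ofReal |F a - F b| ≤ ENNReal.ofReal (L * |a - b|) :=
          ENNReal.ofReal_le_ofReal (key a b ha hb)
      _ = C * ENNReal.ofReal |a - b| := ENNReal.ofReal_mul hLpos.le
  have hdp : ∀ a b c d : ℝ, 0 ≤ a → 0 ≤ b → 0 ≤ c → 0 ≤ d →
      dp p (F a, F b) (F c, F d) ≤ C * dp p (a, b) (c, d) := by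
    intro a b c d ha hb hc hd
    unfold dp
    split_ifs with hinf
    · exact max_le ((keyE a c ha hc).trans (mul_le_mul_right (le_max_left _ _) C))
        ((keyE b d hb hd).trans (mul_le_mul_right (le_max_right _ _) C))
    · have hr : 0 < p.toReal := ENNReal.toReal_pos (zero_lt_one.trans_le hp).ne' hinf
      simp only
      calc (ENNReal.ofReal |F a - F c| ^ p.toReal + ENNReal.ofReal |F b - F d| ^ p.toReal)
            ^ (1 / p.toReal)
          ≤ ((C * ENNReal.ofReal |a - c|) ^ p.toReal
              + (C * ENNReal.ofReal |b - d|) ^ p.toReal) ^ (1 / p.toReal) := by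
            refine ENNReal.rpow_le_rpow ?_ (by positivity)
            exact add_le_add (ENNReal.rpow_le_rpow (keyE a c ha hc) hr.le)
              (ENNReal.rpow_le_rpow (keyE b d hb hd) hr.le)
        _ = (C ^ p.toReal * (ENNReal.ofReal |a - c| ^ p.toReal
              + ENNReal.ofReal |b - d| ^ p.toReal)) ^ (1 / p.toReal) := by
            simp only [ENNReal.mul_rpow_of_nonneg _ _ hr.le, mul_add]
        _ = C * (ENNReal.ofReal |a - c| ^ p.toReal + ENNReal.ofReal |b - d| ^ p.toReal)
              ^ (1 / p.toReal) := factor_rpow _ _ hr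
  have hdd : ∀ a b : ℝ, 0 ≤ a → 0 ≤ b → dDelta p (F a, F b) ≤ C * dDelta p (a, b) := by
    intro a b ha hb
    rw [mul_comm, ← ENNReal.div_le_iff_le_mul (Or.inl hC0) (Or.inl hCt)]
    unfold dDelta
    refine le_iInf₂ fun z hz => ?_
    rw [ENNReal.div_le_iff_le_mul (Or.inl hC0) (Or.inl hCt), mul_comm]
    refine le_trans ?_ (hdp a b z z ha hb hz hz)
    exact iInf₂_le (F z) (hbij.mapsTo hz)
  -- main bound
  rw [mul_comm, ← ENNReal.div_le_iff_le_mul (Or.inl hC0) (Or.inl hCt)]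
  refine le_iInf fun I => le_iInf fun α => le_iInf fun hα => ?_
  rw [ENNReal.div_le_iff_le_mul (Or.inl hC0) (Or.inl hCt), mul_comm]
  have step : Wdist p (D.map F) (D'.map F) ≤
      pNorm3 p
        (pNormE p Finset.univ (fun i : ↥I => dp p ((D.map F).pts i.1) ((D'.map F).pts (α i))))
        (pNormE p Iᶜ (fun i => dDelta p ((D.map F).pts i)))
        (pNormE p (Finset.univ.image α)ᶜ (fun j => dDelta p ((D'.map F).pts j))) :=
    iInf_le_of_le I (iInf_le_of_le α (iInf_le _ hα))
  refine step.trans (pNorm3_le_mul hp C _ _ _ _ _ _ ?_ ?_ ?_)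
  · refine pNormE_le_mul hp _ _ _ C fun i _ => ?_
    have h1 := hD i.1
    have h1' := hD' (α i)
    exact hdp _ _ _ _ h1.1 (h1.1.trans h1.2) h1'.1 (h1'.1.trans h1'.2)
  · refine pNormE_le_mul hp _ _ _ C fun i _ => ?_
    have h1 := hD i
    exact hdd _ _ h1.1 (h1.1.trans h1.2)
  · refine pNormE_le_mul hp _ _ _ C fun j _ => ?_
    have h1 := hD' j
    exact hdd _ _ h1.1 (h1.1.trans h1.2)
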